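/- Let S ⊆ Y = P^{n_1} × ... × P^{n_k} be a nondegenerate finite set with #S = 3 and e(S) > 0 (i.e., ν(S) is contained in a projective line). Then k = 1 and n_1 = 1. -/
import Mathlib


open scoped LinearAlgebra.Projectivization
open Projectivization

/-- The multiprojective space `Y = P^{n 0} × ... × P^{n (k-1)}` over `K`,
where `P^m = P(K^{m+1})`. -/
abbrev MultiProj (K : Type*) [Field K] {k : ℕ} (n : Fin k → ℕ) :=
  ∀ i : Fin k, ℙ K (Fin (n i + 1) → K)

/-- A vector representative of the Segre image `ν(x)` of a point `x ∈ Y`: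
the tensor product of representatives of the coordinates. -/
noncomputable def segreVec {K : Type*} [Field K] {k : ℕ} {n : Fin k → ℕ}
    (x : MultiProj K n) : PiTensorProduct K (fun i : Fin k => Fin (n i + 1) → K) :=
  PiTensorProduct.tprod K (fun i => (x i).rep)

/-- `e(S) = #S − 1 − dim⟨ν(S)⟩`, computed as `#S` minus the rank of the linear span
of vector representatives of `ν(S)`. -/
noncomputable def eSet {K : Type*} [Field K] {k : ℕ} {n : Fin k → ℕ}
    (S : Set (MultiProj K n)) : ℕ :=
  S.ncard - Module.finrank K ↥(Submodule.span K (segreVec '' S))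

/-- `S ⊆ Y` is nondegenerate: `π i '' S` spans `P^{n i}` for every `i`. -/
def Nondeg {K : Type*} [Field K] {k : ℕ} {n : Fin k → ℕ}
    (S : Set (MultiProj K n)) : Prop :=
  ∀ i : Fin k, Submodule.span K ((fun x => (x i).rep) '' S) = ⊤

/-- For products of `P^1`'s: `S` is nondegenerate iff each projection has ≥ 2 points. -/
def NondegPts {K : Type*} [Field K] {k : ℕ} {n : Fin k → ℕ}
    (S : Set (MultiProj K n)) : Prop :=
  ∀ i : Fin k, ∃ p ∈ S, ∃ q ∈ S, p i ≠ q i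

/-- `S` is a circuit: linearly dependent, but every proper subset is linearly independent. -/
def IsCircuit {K : Type*} [Field K] {k : ℕ} {n : Fin k → ℕ}
    (S : Set (MultiProj K n)) : Prop :=
  0 < eSet S ∧ ∀ S' : Set (MultiProj K n), S' ⊂ S → eSet S' = 0

/-- `q ∈ P^r` equals `ν(s)` for the point `s ∈ Y`. -/
def IsSegreOf {K : Type*} [Field K] {k : ℕ} {n : Fin k → ℕ}
    (q : ℙ K (PiTensorProduct K (fun i : Fin k => Fin (n i + 1) → K)))
    (s : MultiProj K n) : Prop :=
  ∃ c : K, q.rep = c • segreVec s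

/-- `q ∈ P^r` lies on the Segre variety `ν(Y)`. -/
def InSegre {K : Type*} [Field K] {k : ℕ} {n : Fin k → ℕ}
    (q : ℙ K (PiTensorProduct K (fun i : Fin k => Fin (n i + 1) → K))) : Prop :=
  ∃ y : MultiProj K n, IsSegreOf q y

/-- `S` is minimal: there is no projective line `L ⊆ P^r` contained in the Segre variety
`ν(Y)` meeting `ν(S)` in at least two points. -/
def IsMinimal {K : Type*} [Field K] {k : ℕ} {n : Fin k → ℕ}
    (S : Set (MultiProj K n)) : Prop :=
  ¬ ∃ W : Submodule K (PiTensorProduct K (fun i : Fin k => Fin (n i + 1) → K)),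
      Module.finrank K ↥W = 2 ∧
      (∀ x : ℙ K (PiTensorProduct K (fun i : Fin k => Fin (n i + 1) → K)),
        x.rep ∈ W → InSegre x) ∧
      ∃ x₁ x₂ : ℙ K (PiTensorProduct K (fun i : Fin k => Fin (n i + 1) → K)),
        x₁ ≠ x₂ ∧ x₁.rep ∈ W ∧ x₂.rep ∈ W ∧
        (∃ s₁ ∈ S, IsSegreOf x₁ s₁) ∧ (∃ s₂ ∈ S, IsSegreOf x₂ s₂)

/-- The `X`-rank of a point `q ∈ P^r`: the minimal cardinality of a finite `A ⊆ Y`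
with `q ∈ ⟨ν(A)⟩`. -/
noncomputable def xRank {K : Type*} [Field K] {k : ℕ} {n : Fin k → ℕ}
    (q : ℙ K (PiTensorProduct K (fun i : Fin k => Fin (n i + 1) → K))) : ℕ :=
  sInf {m : ℕ | ∃ A : Set (MultiProj K n), A.Finite ∧ A.ncard = m ∧
    q.rep ∈ Submodule.span K (segreVec '' A)}

section Helpers

variable {K : Type*} [Field K]

-- dual tools
lemma my_dual_ne {V : Type*} [AddCommGroup V] [Module K V] {v : V} (hv : v ≠ 0) :
    ∃ φ : V →ₗ[K] K, φ v ≠ 0 := by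
  by_contra h
  push_neg at h
  exact hv ((Module.forall_dual_apply_eq_zero_iff K v).mp h)

lemma my_dual_ne_pair {V : Type*} [AddCommGroup V] [Module K V] {u v : V}
    (hu : u ≠ 0) (hv : v ≠ 0) : ∃ φ : V →ₗ[K] K, φ u ≠ 0 ∧ φ v ≠ 0 := by
  obtain ⟨φ, hφ⟩ := my_dual_ne (K := K) hu
  obtain ⟨ψ, hψ⟩ := my_dual_ne (K := K) hv
  by_cases h1 : φ v ≠ 0
  · exact ⟨φ, hφ, h1⟩
  by_cases h2 : ψ u ≠ 0
  · exact ⟨ψ, h2, hψ⟩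
  push_neg at h1 h2
  refine ⟨φ + ψ, ?_, ?_⟩ <;> simp [h1, h2, hφ, hψ]

lemma my_dual_zero_ne {V : Type*} [AddCommGroup V] [Module K V] {u v : V}
    (h : ∀ c : K, v ≠ c • u) : ∃ φ : V →ₗ[K] K, φ u = 0 ∧ φ v ≠ 0 := by
  have hvW : v ∉ Submodule.span K {u} := by
    intro hm
    obtain ⟨c, hc⟩ := (Submodule.mem_span_singleton (R := K)).mp hm
    exact h c hc.symm
  have hq : (Submodule.span K {u}).mkQ v ≠ 0 := by
    simpa [Submodule.Quotient.mk_eq_zero] using hvW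
  obtain ⟨g, hg⟩ := my_dual_ne (K := K) hq
  refine ⟨g ∘ₗ (Submodule.span K {u}).mkQ, ?_, hg⟩
  have : (Submodule.span K {u}).mkQ u = 0 := by
    simp [Submodule.Quotient.mk_eq_zero, Submodule.mem_span_singleton_self]
  simp [this]

lemma proj_ne_smul {V : Type*} [AddCommGroup V] [Module K V] {x y : ℙ K V}
    (hxy : x ≠ y) (c : K) : y.rep ≠ c • x.rep := by
  intro h
  rcases eq_or_ne c 0 with rfl | hc
  · exact y.rep_nonzero (by simpa using h)
  apply hxy
  rw [← x.mk_rep, ← y.mk_rep, Projectivization.mk_eq_mk_iff]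
  exact ⟨(Units.mk0 c hc)⁻¹, by rw [h]; simp [Units.smul_def, smul_smul, inv_mul_cancel₀ hc]⟩

end Helpers

section Eval

variable {K : Type*} [Field K] {k : ℕ} {n : Fin k → ℕ}

noncomputable def evalT (φ : ∀ i : Fin k, (Fin (n i + 1) → K) →ₗ[K] K) :
    PiTensorProduct K (fun i : Fin k => Fin (n i + 1) → K) →ₗ[K] K :=
  PiTensorProduct.lift ((MultilinearMap.mkPiAlgebra K (Fin k) K).compLinearMap φ)

lemma evalT_tprod (φ : ∀ i : Fin k, (Fin (n i + 1) → K) →ₗ[K] K)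
    (v : ∀ i : Fin k, Fin (n i + 1) → K) :
    evalT φ (PiTensorProduct.tprod K v) = ∏ i, φ i (v i) := by
  simp [evalT]

lemma rel_eval {p q r : MultiProj K n} {a b c : K}
    (h : a • segreVec p + b • segreVec q + c • segreVec r = 0)
    (φ : ∀ l : Fin k, (Fin (n l + 1) → K) →ₗ[K] K) :
    a * ∏ l, φ l ((p l).rep) + b * ∏ l, φ l ((q l).rep)
      + c * ∏ l, φ l ((r l).rep) = 0 := by
  have := congrArg (evalT φ) h
  simpa [map_add, map_smul, evalT_tprod, segreVec, smul_eq_mul] using this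

end Eval

section Lemmas

variable {K : Type*} [Field K] {k : ℕ} {n : Fin k → ℕ}

lemma L1 {p : MultiProj K n} {a : K} (h : a • segreVec p = 0) : a = 0 := by
  choose χ hχ using fun l : Fin k => my_dual_ne (K := K) (Projectivization.rep_nonzero (p l))
  have h3 : a • segreVec p + (0:K) • segreVec p + (0:K) • segreVec p = 0 := by
    simpa using h
  have := rel_eval h3 χ
  simp only [zero_mul, add_zero] at this
  rcases mul_eq_zero.mp this with h0 | h0
  · exact h0
  · exact absurd h0 (Finset.prod_ne_zero_iff.mpr fun l _ => hχ l)

lemma L2 {p q : MultiProj K n} {a b : K} (hpq : p ≠ q)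
    (h : a • segreVec p + b • segreVec q = 0) : a = 0 := by
  obtain ⟨i, hi⟩ := Function.ne_iff.mp hpq
  obtain ⟨A, hAq, hAp⟩ := my_dual_zero_ne (u := (q i).rep) (v := (p i).rep)
    (fun c => proj_ne_smul (Ne.symm hi) c)
  choose χ hχ using fun l : Fin k => my_dual_ne (K := K) (Projectivization.rep_nonzero (p l))
  set φ := Function.update χ i A with hφ
  have h3 : a • segreVec p + b • segreVec q + (0:K) • segreVec q = 0 := by
    simpa using h
  have hrel := rel_eval h3 φ
  have hqz : ∏ l, φ l ((q l).rep) = 0 := by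
    refine Finset.prod_eq_zero (Finset.mem_univ i) ?_
    simp [hφ, hAq]
  have hpnz : ∏ l, φ l ((p l).rep) ≠ 0 := by
    refine Finset.prod_ne_zero_iff.mpr fun l _ => ?_
    rcases eq_or_ne l i with rfl | hl
    · simpa [hφ] using hAp
    · simpa [hφ, Function.update_of_ne hl] using hχ l
  rw [hqz] at hrel
  simp only [mul_zero, add_zero, zero_mul] at hrel
  rcases mul_eq_zero.mp hrel with h0 | h0
  · exact h0
  · exact absurd h0 hpnz

lemma L3 {p q r : MultiProj K n} {a b c : K}
    (h : a • segreVec p + b • segreVec q + c • segreVec r = 0)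
    {i j : Fin k} (hij : i ≠ j) (hi : p i ≠ q i) (hj : p j ≠ q j) :
    a = 0 ∨ b = 0 := by
  by_contra hcon
  push_neg at hcon
  obtain ⟨ha, hb⟩ := hcon
  obtain ⟨A1, hA1q, hA1p⟩ := my_dual_zero_ne (u := (q i).rep) (v := (p i).rep)
    (fun c => proj_ne_smul (Ne.symm hi) c)
  obtain ⟨A2, hA2p, hA2q⟩ := my_dual_zero_ne (u := (p i).rep) (v := (q i).rep)
    (fun c => proj_ne_smul hi c)
  obtain ⟨B1, hB1q, hB1p⟩ := my_dual_zero_ne (u := (q j).rep) (v := (p j).rep)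
    (fun c => proj_ne_smul (Ne.symm hj) c)
  obtain ⟨B2, hB2p, hB2q⟩ := my_dual_zero_ne (u := (p j).rep) (v := (q j).rep)
    (fun c => proj_ne_smul hj c)
  choose χ hχp hχq using fun l : Fin k =>
    my_dual_ne_pair (K := K) (Projectivization.rep_nonzero (p l))
      (Projectivization.rep_nonzero (q l))
  set s : Finset (Fin k) := (Finset.univ.erase i).erase j with hs
  have hjmem : j ∈ Finset.univ.erase i := Finset.mem_erase.mpr ⟨Ne.symm hij, Finset.mem_univ j⟩
  have hprod : ∀ (α : (Fin (n i + 1) → K) →ₗ[K] K) (β : (Fin (n j + 1) → K) →ₗ[K] K)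
      (x : MultiProj K n),
      ∏ l, (Function.update (Function.update χ i α) j β) l ((x l).rep)
        = α ((x i).rep) * (β ((x j).rep) * ∏ l ∈ s, χ l ((x l).rep)) := by
    intro α β x
    rw [← Finset.mul_prod_erase Finset.univ _ (Finset.mem_univ i),
        ← Finset.mul_prod_erase (Finset.univ.erase i) _ hjmem]
    have e1 : (Function.update (Function.update χ i α) j β) i ((x i).rep) = α ((x i).rep) := by
      rw [Function.update_of_ne hij, Function.update_self]
    have e2 : (Function.update (Function.update χ i α) j β) j ((x j).rep) = β ((x j).rep) := by
      rw [Function.update_self]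
    have e3 : ∀ l ∈ s, (Function.update (Function.update χ i α) j β) l ((x l).rep)
        = χ l ((x l).rep) := by
      intro l hl
      simp only [hs, Finset.mem_erase] at hl
      rw [Function.update_of_ne hl.1, Function.update_of_ne hl.2.1]
    rw [e1, e2, Finset.prod_congr rfl e3]
  have main : ∀ (α : (Fin (n i + 1) → K) →ₗ[K] K) (β : (Fin (n j + 1) → K) →ₗ[K] K),
      a * (α ((p i).rep) * (β ((p j).rep) * ∏ l ∈ s, χ l ((p l).rep)))
        + b * (α ((q i).rep) * (β ((q j).rep) * ∏ l ∈ s, χ l ((q l).rep)))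
        + c * (α ((r i).rep) * (β ((r j).rep) * ∏ l ∈ s, χ l ((r l).rep))) = 0 := by
    intro α β
    have := rel_eval h (Function.update (Function.update χ i α) j β)
    rwa [hprod, hprod, hprod] at this
  set Pp := ∏ l ∈ s, χ l ((p l).rep) with hPp
  set Pq := ∏ l ∈ s, χ l ((q l).rep) with hPq
  set Pr := ∏ l ∈ s, χ l ((r l).rep) with hPr
  have hPpnz : Pp ≠ 0 := Finset.prod_ne_zero_iff.mpr fun l _ => hχp l
  have hPqnz : Pq ≠ 0 := Finset.prod_ne_zero_iff.mpr fun l _ => hχq l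
  have h11 := main A1 B1
  have h22 := main A2 B2
  have h12 := main A1 B2
  have h21 := main A2 B1
  rw [hA1q] at h11 h12
  rw [hA2p] at h22 h21
  rw [hB2p] at h22 h12
  rw [hB1q] at h11 h21
  simp only [zero_mul, mul_zero, add_zero, zero_add] at h11 h22 h12 h21
  -- h11 : a * (A1 p * (B1 p * Pp)) + c * (A1 r * (B1 r * Pr)) = 0
  -- h22 : b * (A2 q * (B2 q * Pq)) + c * (A2 r * (B2 r * Pr)) = 0
  -- h12 : c * (A1 r * (B2 r * Pr)) = 0
  -- h21 : c * (A2 r * (B1 r * Pr)) = 0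
  have hz : (a * (A1 ((p i).rep) * (B1 ((p j).rep) * Pp)))
      * (b * (A2 ((q i).rep) * (B2 ((q j).rep) * Pq))) = 0 := by
    linear_combination (b * (A2 ((q i).rep) * (B2 ((q j).rep) * Pq))) * h11
      - (c * (A1 ((r i).rep) * (B1 ((r j).rep) * Pr))) * h22
      + (c * (A2 ((r i).rep) * (B1 ((r j).rep) * Pr))) * h12
  have hnz : (a * (A1 ((p i).rep) * (B1 ((p j).rep) * Pp)))
      * (b * (A2 ((q i).rep) * (B2 ((q j).rep) * Pq))) ≠ 0 :=
    mul_ne_zero (mul_ne_zero ha (mul_ne_zero hA1p (mul_ne_zero hB1p hPpnz)))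
      (mul_ne_zero hb (mul_ne_zero hA2q (mul_ne_zero hB2q hPqnz)))
  exact hnz hz

end Lemmas

theorem segre_dependent_card_three
    {K : Type*} [Field K] {k : ℕ} {n : Fin k → ℕ}
    (hk : 0 < k) (hn : ∀ i, 0 < n i)
    (S : Set (MultiProj K n)) (hSfin : S.Finite) (hScard : S.ncard = 3)
    (hnd : Nondeg S) (hdep : 0 < eSet S) :
    k = 1 ∧ ∀ i, n i = 1 := by
  classical
  obtain ⟨p, q, r, hpq, hpr, hqr, rfl⟩ := Set.ncard_eq_three.mp hScard
  have hfr : Module.finrank K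
      ↥(Submodule.span K (segreVec '' ({p, q, r} : Set (MultiProj K n)))) ≤ 2 := by
    unfold eSet at hdep
    rw [hScard] at hdep
    omega
  have himg3 : segreVec '' ({p, q, r} : Set (MultiProj K n))
      = {segreVec p, segreVec q, segreVec r} := by
    simp [Set.image_insert_eq]
  have hnli : ¬ LinearIndependent K ![segreVec p, segreVec q, segreVec r] := by
    intro hli
    have hr0 : Set.range ![segreVec p, segreVec q, segreVec r]
        = {segreVec p, segreVec q, segreVec r} := by
      rw [Matrix.range_cons, Matrix.range_cons, Matrix.range_cons_empty]
      ext t; constructor <;> (intro h; tauto)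
    have hcard := finrank_span_eq_card hli
    rw [hr0, ← himg3] at hcard
    rw [hcard] at hfr
    simp at hfr
  obtain ⟨g, hg0, i, hgi⟩ := Fintype.not_linearIndependent_iff.mp hnli
  rw [Fin.sum_univ_three] at hg0
  have hg : g 0 • segreVec p + g 1 • segreVec q + g 2 • segreVec r = 0 := by
    simpa using hg0
  set a := g 0 with ha_def
  set b := g 1 with hb_def
  set c := g 2 with hc_def
  have hne : ¬ (a = 0 ∧ b = 0 ∧ c = 0) := by
    rintro ⟨h1, h2, h3⟩
    fin_cases i
    · exact hgi h1
    · exact hgi h2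
    · exact hgi h3
  have hprq : a • segreVec p + c • segreVec r + b • segreVec q = 0 := by
    linear_combination (norm := module) hg
  have hqrp : b • segreVec q + c • segreVec r + a • segreVec p = 0 := by
    linear_combination (norm := module) hg
  have hcc : c ≠ 0 := by
    intro h0
    have h' : a • segreVec p + b • segreVec q = 0 := by
      have := hg; rw [h0] at this; simpa using this
    by_cases hb : b = 0
    · have h'' : a • segreVec p = 0 := by rw [hb] at h'; simpa using h'
      exact hne ⟨L1 h'', hb, h0⟩
    · have h'2 : b • segreVec q + a • segreVec p = 0 := by rw [add_comm] at h'; exact h'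
      exact hb (L2 (Ne.symm hpq) h'2)
  have hbb : b ≠ 0 := by
    intro h0
    have h' : a • segreVec p + c • segreVec r = 0 := by
      have := hprq; rw [h0] at this; simpa using this
    by_cases ha : a = 0
    · have h'' : c • segreVec r = 0 := by rw [ha] at h'; simpa using h'
      exact hne ⟨ha, h0, L1 h''⟩
    · exact ha (L2 hpr h')
  have haa : a ≠ 0 := by
    intro h0
    have h' : b • segreVec q + c • segreVec r = 0 := by
      have := hqrp; rw [h0] at this; simpa using this
    exact hbb (L2 hqr h')
  have hPQ : ∀ i' j', i' ≠ j' → p i' ≠ q i' → p j' ≠ q j' → False := by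
    intro i' j' h1 h2 h3
    rcases L3 hg h1 h2 h3 with h0 | h0
    exacts [haa h0, hbb h0]
  have hPR : ∀ i' j', i' ≠ j' → p i' ≠ r i' → p j' ≠ r j' → False := by
    intro i' j' h1 h2 h3
    rcases L3 hprq h1 h2 h3 with h0 | h0
    exacts [haa h0, hcc h0]
  have hQR : ∀ i' j', i' ≠ j' → q i' ≠ r i' → q j' ≠ r j' → False := by
    intro i' j' h1 h2 h3
    rcases L3 hqrp h1 h2 h3 with h0 | h0
    exacts [hbb h0, hcc h0]
  obtain ⟨i₀, hi₀⟩ := Function.ne_iff.mp hpq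
  have hq_eq : ∀ l, l ≠ i₀ → p l = q l := by
    intro l hl
    by_contra hne'
    exact hPQ i₀ l (Ne.symm hl) hi₀ hne'
  have hr_eq : ∀ l, l ≠ i₀ → p l = r l := by
    intro l hl
    by_contra hne'
    by_cases hri : r i₀ = p i₀
    · exact hQR i₀ l (Ne.symm hl) (by rw [hri]; exact Ne.symm hi₀)
        (by rw [← hq_eq l hl]; exact hne')
    · exact hPR i₀ l (Ne.symm hl) (fun hh => hri hh.symm) hne'
  have hk1 : k = 1 := by
    by_contra hk1
    haveI : Nontrivial (Fin k) := Fin.nontrivial_iff_two_le.mpr (by omega)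
    obtain ⟨j, hj⟩ := exists_ne i₀
    have e1 : q j = p j := (hq_eq j hj).symm
    have e2 : r j = p j := (hr_eq j hj).symm
    have him : (fun x : MultiProj K n => (x j).rep) '' {p, q, r} = {(p j).rep} := by
      simp [Set.image_insert_eq, e1, e2]
    have hsp := hnd j
    rw [him] at hsp
    have h2 : Module.finrank K ↥(Submodule.span K {(p j).rep}) = 1 :=
      finrank_span_singleton (Projectivization.rep_nonzero (p j))
    rw [hsp, finrank_top, Module.finrank_fin_fun] at h2
    have := hn j
    omega
  subst hk1
  refine ⟨rfl, fun i => ?_⟩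
  have hi0 : i = 0 := Subsingleton.elim i 0
  subst hi0
  let M0 : MultilinearMap K (fun l : Fin 1 => Fin (n l + 1) → K) (Fin (n 0 + 1) → K) :=
    { toFun := fun f => f 0
      map_update_add' := by
        intro dec m i x y
        have h0 : i = 0 := Subsingleton.elim i 0
        subst h0
        simp
      map_update_smul' := by
        intro dec m i cc x
        have h0 : i = 0 := Subsingleton.elim i 0
        subst h0
        simp }
  let L := PiTensorProduct.lift M0
  have hLs : ∀ x : MultiProj K n, L (segreVec x) = (x 0).rep := by
    intro x
    simp only [segreVec, L, PiTensorProduct.lift.tprod]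
    rfl
  have himgL : L '' (segreVec '' ({p, q, r} : Set (MultiProj K n)))
      = (fun x : MultiProj K n => (x 0).rep) '' {p, q, r} := by
    rw [Set.image_image]
    exact Set.image_congr fun x _ => hLs x
  have hmapL : Submodule.map L (Submodule.span K (segreVec '' ({p, q, r} : Set (MultiProj K n)))) = ⊤ := by
    rw [Submodule.map_span, himgL, hnd 0]
  haveI : Module.Finite K
      ↥(Submodule.span K (segreVec '' ({p, q, r} : Set (MultiProj K n)))) :=
    FiniteDimensional.span_of_finite K (hSfin.image _)
  have hle := Submodule.finrank_map_le L
    (Submodule.span K (segreVec '' ({p, q, r} : Set (MultiProj K n))))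
  rw [hmapL, finrank_top, Module.finrank_fin_fun] at hle
  have := hn 0
  omega
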